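/- Let Q be a real symmetric P×P matrix with eigenvalues ω_1,…,ω_P and corresponding orthonormal eigenvectors v_1,…,v_P, let E ∈ ℝ and α > 0. For θ ∈ ℝ^P define z(θ) = (1/2)(θ⊤Qθ − E) and the loss L(θ) = (1/2) z(θ)², and let (θ_t) be the gradient-descent iterates θ_{t+1} = θ_t − α ∇L(θ_t). Define the rescaled quantities z̃_t = α z(θ_t) and J̃_{i,t} = √α · ⟨Qθ_t, v_i⟩ for 1 ≤ i ≤ P. Then for every t: z̃_{t+1} − z̃_t = − z̃_t Σ_{i=1}^P J̃_{i,t}² + (1/2) z̃_t² Σ_{i=1}^P ω_i J̃_{i,t}², and J̃_{i,t+1}² − J̃_{i,t}² = − z̃_t ω_i (2 − z̃_t ω_i) J̃_{i,t}² for all 1 ≤ i ≤ P. -/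

import Mathlib

open Matrix

/-- Gradient descent on the quartic loss `L(θ) = z(θ)²/2` with
`z(θ) = (1/2)(θᵀQθ − E)` for a symmetric matrix `Q` with eigenvalues `ω_i` and
orthonormal eigenvectors `v_i`.  The rescaled quantities `z̃_t = α z(θ_t)` and
`J̃_{i,t} = √α ⟨Qθ_t, v_i⟩` satisfy the mode recursions
`z̃_{t+1} − z̃_t = − z̃_t Σ_i J̃_{i,t}² + (1/2) z̃_t² Σ_i ω_i J̃_{i,t}²` and
`J̃_{i,t+1}² − J̃_{i,t}² = − z̃_t ω_i (2 − z̃_t ω_i) J̃_{i,t}²`. -/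
theorem stmt0 (P : ℕ) (Q : Matrix (Fin P) (Fin P) ℝ) (hQ : Q.IsSymm)
    (ω : Fin P → ℝ) (v : Fin P → EuclideanSpace ℝ (Fin P))
    (hON : Orthonormal ℝ v)
    (hev : ∀ i, Q.mulVec (v i) = ω i • (v i : Fin P → ℝ))
    (E α : ℝ) (hα : 0 < α)
    (z : EuclideanSpace ℝ (Fin P) → ℝ)
    (hz : ∀ θ, z θ = (1 / 2) * ((θ : Fin P → ℝ) ⬝ᵥ Q.mulVec θ - E))
    (L : EuclideanSpace ℝ (Fin P) → ℝ)
    (hL : ∀ θ, L θ = (1 / 2) * (z θ) ^ 2)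
    (θ : ℕ → EuclideanSpace ℝ (Fin P))
    (hθ : ∀ t, θ (t + 1) = θ t - α • gradient L (θ t))
    (zt : ℕ → ℝ) (hzt : ∀ t, zt t = α * z (θ t))
    (Jt : Fin P → ℕ → ℝ)
    (hJt : ∀ i t, Jt i t = Real.sqrt α * (Q.mulVec (θ t) ⬝ᵥ (v i : Fin P → ℝ))) :
    (∀ t, zt (t + 1) - zt t =
        - zt t * ∑ i, (Jt i t) ^ 2 + (1 / 2) * (zt t) ^ 2 * ∑ i, ω i * (Jt i t) ^ 2) ∧
      (∀ i t, (Jt i (t + 1)) ^ 2 - (Jt i t) ^ 2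
        = - zt t * ω i * (2 - zt t * ω i) * (Jt i t) ^ 2) := by
  classical
  set T := (Matrix.toEuclideanLin Q).toContinuousLinearMap with hTdef
  -- inner product vs dot product
  have hin : ∀ a b : EuclideanSpace ℝ (Fin P),
      (inner ℝ a b : ℝ) = (a : Fin P → ℝ) ⬝ᵥ (b : Fin P → ℝ) := by
    intro a b
    simp [PiLp.inner_apply, dotProduct, mul_comm]
  have hTapp : ∀ a : EuclideanSpace ℝ (Fin P), (T a : Fin P → ℝ) = Q.mulVec a := fun a => rfl
  have hherm : Q.IsHermitian := by
    rw [Matrix.IsHermitian]; simpa using hQ.eq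
  have hsym : ∀ a b : EuclideanSpace ℝ (Fin P), (inner ℝ (T a) b : ℝ) = inner ℝ a (T b) := by
    have := (Matrix.isHermitian_iff_isSymmetric).1 hherm
    exact fun a b => this a b
  have hzeq : ∀ y : EuclideanSpace ℝ (Fin P), z y = (1/2) * ((inner ℝ y (T y) : ℝ) - E) := by
    intro y; rw [hz, hin, hTapp]
  -- eigenvectors
  have hTv : ∀ i, T (v i) = ω i • v i := by
    intro i
    ext j
    have := congrFun (hev i) j
    simpa [hTapp] using this
  -- gradient of L
  have hgrad : ∀ x : EuclideanSpace ℝ (Fin P), gradient L x = z x • T x := by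
    intro x
    have hLeq : L = fun y : EuclideanSpace ℝ (Fin P) =>
        (1/2) * ((1/2) * ((inner ℝ y (T y) : ℝ) - E))^2 := by
      funext y; rw [hL, hzeq]
    set zx : ℝ := (1/2) * ((inner ℝ x (T x) : ℝ) - E) with hzx
    have hF : HasFDerivAt (fun y : EuclideanSpace ℝ (Fin P) => (inner ℝ y (T y) : ℝ))
        ((fderivInnerCLM ℝ (x, T x)).comp ((ContinuousLinearMap.id ℝ _).prod T)) x :=
      HasFDerivAt.inner ℝ (hasFDerivAt_id x) (T.hasFDerivAt)
    have hφ : HasDerivAt (fun s : ℝ => (1/2) * ((1/2) * (s - E))^2) (zx / 2)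
        (inner ℝ x (T x) : ℝ) := by
      have h1 : HasDerivAt (fun s : ℝ => (1/2) * (s - E)) (1/2) (inner ℝ x (T x) : ℝ) := by
        simpa using (((hasDerivAt_id (inner ℝ x (T x) : ℝ)).sub_const E).const_mul (1/2 : ℝ))
      have h2 := (h1.pow 2).const_mul (1/2 : ℝ)
      refine h2.congr_deriv ?_
      rw [hzx]; ring
    have hLF := hφ.comp_hasFDerivAt x hF
    have hkey : (zx / 2) •
        ((fderivInnerCLM ℝ (x, T x)).comp ((ContinuousLinearMap.id ℝ _).prod T))
        = (InnerProductSpace.toDual ℝ (EuclideanSpace ℝ (Fin P))) (zx • T x) := by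
      ext h
      simp only [ContinuousLinearMap.smul_apply, ContinuousLinearMap.comp_apply,
        ContinuousLinearMap.prod_apply, ContinuousLinearMap.id_apply, fderivInnerCLM_apply,
        InnerProductSpace.toDual_apply_apply, real_inner_smul_left]
      rw [← hsym x h, real_inner_comm (T x) h]
      simp only [smul_eq_mul]
      ring
    have hGrad : HasGradientAt L (zx • T x) x := by
      rw [hLeq, hasGradientAt_iff_hasFDerivAt, ← hkey]
      exact hLF
    rw [hGrad.gradient, hzeq]
  -- update rule
  have hx' : ∀ t, θ (t + 1) = θ t - (α * z (θ t)) • T (θ t) := by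
    intro t
    rw [hθ, hgrad, smul_smul]
  -- rescaled Jacobian in terms of inner products
  have hJeq : ∀ i t, Jt i t = Real.sqrt α * (inner ℝ (T (θ t)) (v i) : ℝ) := by
    intro i t
    rw [hJt, hin, hTapp]
  -- evolution of the inner products
  have hJstep : ∀ t i, (inner ℝ (T (θ (t + 1))) (v i) : ℝ)
      = (1 - α * z (θ t) * ω i) * (inner ℝ (T (θ t)) (v i) : ℝ) := by
    intro t i
    rw [hx', map_sub, T.map_smul, inner_sub_left, real_inner_smul_left]
    rw [hsym (T (θ t)) (v i), hTv, real_inner_smul_right]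
    ring
  -- orthonormal basis
  have hspan : ⊤ ≤ Submodule.span ℝ (Set.range v) := by
    rw [hON.linearIndependent.span_eq_top_of_card_eq_finrank' (by simp)]
  let b : OrthonormalBasis (Fin P) ℝ (EuclideanSpace ℝ (Fin P)) := OrthonormalBasis.mk hON hspan
  have hb : ∀ i, b i = v i := fun i => by simp [b]
  -- Parseval identities
  have hS1 : ∀ t, (inner ℝ (T (θ t)) (T (θ t)) : ℝ) = ∑ i, (inner ℝ (T (θ t)) (v i) : ℝ)^2 := by
    intro t
    rw [← b.sum_inner_mul_inner (T (θ t)) (T (θ t))]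
    refine Finset.sum_congr rfl fun i _ => ?_
    rw [hb, real_inner_comm (v i) (T (θ t))]; ring
  have hS2 : ∀ t, (inner ℝ (T (θ t)) (T (T (θ t))) : ℝ)
      = ∑ i, ω i * (inner ℝ (T (θ t)) (v i) : ℝ)^2 := by
    intro t
    rw [← b.sum_inner_mul_inner (T (θ t)) (T (T (θ t)))]
    refine Finset.sum_congr rfl fun i _ => ?_
    have h3 : (inner ℝ (v i) (T (T (θ t))) : ℝ) = ω i * (inner ℝ (T (θ t)) (v i) : ℝ) := by
      rw [← hsym (v i) (T (θ t)), hTv, real_inner_smul_left]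
      rw [real_inner_comm]
    rw [hb, h3]
    ring
  have hα' : Real.sqrt α ^ 2 = α := Real.sq_sqrt hα.le
  constructor
  · intro t
    set c : ℝ := α * z (θ t) with hc
    have hzt1 : zt t = c := hzt t
    have hinner' : (inner ℝ (θ (t+1)) (T (θ (t+1))) : ℝ)
        = (inner ℝ (θ t) (T (θ t)) : ℝ) - 2 * c * (inner ℝ (T (θ t)) (T (θ t)) : ℝ)
          + c^2 * (inner ℝ (T (θ t)) (T (T (θ t))) : ℝ) := by
      rw [hx' t, map_sub, T.map_smul, inner_sub_left, inner_sub_right, inner_sub_right,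
        real_inner_smul_left, real_inner_smul_left, real_inner_smul_right,
        real_inner_smul_right, ← hsym (θ t) (T (θ t))]
      nth_rewrite 2 [real_inner_comm]
      ring
    have hz' : z (θ (t+1)) = z (θ t)
        - (1/2) * (2 * c * (inner ℝ (T (θ t)) (T (θ t)) : ℝ)
          - c^2 * (inner ℝ (T (θ t)) (T (T (θ t))) : ℝ)) := by
      rw [hzeq, hzeq, hinner']; ring
    have hsum1 : ∑ i, (Jt i t)^2 = α * ∑ i, (inner ℝ (T (θ t)) (v i) : ℝ)^2 := by
      rw [Finset.mul_sum]
      refine Finset.sum_congr rfl fun i _ => ?_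
      rw [hJeq, mul_pow, hα']
    have hsum2 : ∑ i, ω i * (Jt i t)^2
        = α * ∑ i, ω i * (inner ℝ (T (θ t)) (v i) : ℝ)^2 := by
      rw [Finset.mul_sum]
      refine Finset.sum_congr rfl fun i _ => ?_
      rw [hJeq, mul_pow, hα']; ring
    rw [hzt (t+1), hzt t, hz', hsum1, hsum2, hS1 t, hS2 t, ← hc]
    ring
  · intro i t
    have h1 : Jt i (t+1) = (1 - zt t * ω i) * Jt i t := by
      rw [hJeq, hJeq, hJstep, hzt]; ring
    have h2 : (Jt i t)^2 = (Jt i t)^2 := rfl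
    rw [h1]; ring
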